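/- Let p be a real polynomial with only simple real zeros. Then the polynomial P₁(x) = (p'(x))² − p(x)·p''(x) is strictly positive for all real x. -/

import Mathlib

open Polynomial

lemma key_identity (s : Finset ℂ) :
    (derivative (∏ r ∈ s, (X - C r)))^2
      - (∏ r ∈ s, (X - C r)) * derivative (derivative (∏ r ∈ s, (X - C r)))
    = ∑ r ∈ s, (∏ t ∈ s.erase r, (X - C t))^2 := by
  induction s using Finset.induction_on with
  | empty => simp
  | @insert a s ha ih =>

    rw [Finset.prod_insert ha, Finset.sum_insert ha, Finset.erase_insert ha]
    have hsum : ∑ r ∈ s, (∏ t ∈ (insert a s).erase r, (X - C t))^2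
        = (X - C a)^2 * ∑ r ∈ s, (∏ t ∈ s.erase r, (X - C t))^2 := by
      rw [Finset.mul_sum]
      refine Finset.sum_congr rfl fun r hr => ?_
      have hne : a ≠ r := fun h => ha (h ▸ hr)
      rw [Finset.erase_insert_of_ne hne,
        Finset.prod_insert (fun h => ha (Finset.mem_of_mem_erase h)), mul_pow]
    rw [hsum]
    simp only [derivative_mul, derivative_add, derivative_X_sub_C, derivative_one]
    linear_combination (X - C a)^2 * ih

/-- Laguerre inequality: if a real polynomial `p` of degree ≥ 1 has all its complex
roots real and simple, then `(p')² - p·p'' > 0` everywhere on `ℝ`. -/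
theorem laguerre_inequality (p : ℝ[X]) (hdeg : 1 ≤ p.natDegree)
    (hreal : ∀ z : ℂ, Polynomial.aeval z p = 0 → z.im = 0)
    (hsimple : ∀ z : ℂ, Polynomial.aeval z p = 0 → Polynomial.aeval z (derivative p) ≠ 0) :
    ∀ x : ℝ, 0 < (Polynomial.eval x (derivative p))^2
      - Polynomial.eval x p * Polynomial.eval x (derivative (derivative p)) := by
  intro x
  set f := algebraMap ℝ ℂ with hf
  set P : ℂ[X] := p.map f with hPdef
  have hp0 : p ≠ 0 := fun h => by simp [h] at hdeg
  have hP0 : P ≠ 0 := (Polynomial.map_ne_zero_iff f.injective).mpr hp0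
  have haev : ∀ z : ℂ, Polynomial.aeval z p = eval z P := fun z => by
    rw [aeval_def, hPdef, eval_map]
  have hsplit : P.Splits := IsAlgClosed.splits P
  have haev' : ∀ z : ℂ, Polynomial.aeval z (derivative p) = eval z (derivative P) := fun z => by
    rw [aeval_def, hPdef, derivative_map, eval_map]
  -- roots are nodup
  have hnd : P.roots.Nodup := by
    rw [Multiset.nodup_iff_count_le_one]
    intro z
    rw [Polynomial.count_roots]
    by_cases hz : IsRoot P z
    · have hz' : Polynomial.aeval z p = 0 := by rw [haev]; exact hz
      have hd : rootMultiplicity z (derivative P) = 0 :=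
        Polynomial.rootMultiplicity_eq_zero fun hcon =>
          (hsimple z hz') (by rw [haev']; exact hcon)
      have := Polynomial.derivative_rootMultiplicity_of_root hz
      omega
    · rw [Polynomial.rootMultiplicity_eq_zero hz]; omega
  set S : Finset ℂ := P.roots.toFinset with hSdef
  have hSval : S.val = P.roots := by rw [hSdef, Multiset.toFinset_val, hnd.dedup]
  have hScard : S.card = p.natDegree := by
    rw [Finset.card, hSval, (Polynomial.splits_iff_card_roots).mp hsplit,
      Polynomial.natDegree_map]
  -- members of S are real roots
  have hSim : ∀ t ∈ S, t.im = 0 := by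
    intro t ht
    refine hreal t ?_
    rw [haev]
    have : t ∈ P.roots := by rw [← hSval]; exact ht
    exact (Polynomial.mem_roots hP0).mp this
  -- product formula
  have hprod : P = C P.leadingCoeff * ∏ r ∈ S, (X - C r) := by
    have h2 : ∏ r ∈ S, (X - C r) = (Multiset.map (fun a => X - C a) P.roots).prod := by
      rw [Finset.prod_eq_multiset_prod, hSval]
    rw [h2]
    exact hsplit.eq_prod_roots
  have hlc : P.leadingCoeff = (p.leadingCoeff : ℂ) := by
    rw [hPdef, Polynomial.leadingCoeff_map]; rfl
  have hev : ∀ q : ℝ[X], ((eval x q : ℝ) : ℂ) = eval (x:ℂ) (q.map f) := fun q => by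
    rw [eval_map]
    exact (Polynomial.eval₂_at_apply f x).symm
  set g : ℂ → ℝ := fun r => ∏ t ∈ S.erase r, (x - t.re) with hg
  have hterm : ∀ r ∈ S, ∏ t ∈ S.erase r, ((x:ℂ) - t) = ((g r : ℝ) : ℂ) := by
    intro r _
    rw [hg]
    push_cast
    refine Finset.prod_congr rfl fun t ht => ?_
    have h0 : t.im = 0 := hSim t (Finset.mem_of_mem_erase ht)
    apply Complex.ext <;> simp [h0]
  have hkey : (((eval x (derivative p))^2
      - eval x p * eval x (derivative (derivative p)) : ℝ) : ℂ)
      = (((p.leadingCoeff)^2 * ∑ r ∈ S, (g r)^2 : ℝ) : ℂ) := by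
    push_cast
    rw [hev, hev, hev]
    simp only [← derivative_map]
    rw [← hPdef]
    have : (eval (x:ℂ) (derivative P))^2
        - eval (x:ℂ) P * eval (x:ℂ) (derivative (derivative P))
        = eval (x:ℂ) ((derivative P)^2 - P * derivative (derivative P)) := by
      simp
    rw [this, hprod, derivative_C_mul, derivative_C_mul]
    have h4 : (C P.leadingCoeff * derivative (∏ r ∈ S, (X - C r)))^2
        - (C P.leadingCoeff * ∏ r ∈ S, (X - C r)) * (C P.leadingCoeff * derivative (derivative (∏ r ∈ S, (X - C r))))
        = C P.leadingCoeff^2 * ((derivative (∏ r ∈ S, (X - C r)))^2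
          - (∏ r ∈ S, (X - C r)) * derivative (derivative (∏ r ∈ S, (X - C r)))) := by ring
    rw [h4, key_identity]
    rw [eval_mul, eval_pow, eval_C, eval_finset_sum, hlc]
    congr 1
    refine Finset.sum_congr rfl fun r hr => ?_
    rw [eval_pow, eval_prod]
    simp only [eval_sub, eval_X, eval_C]
    rw [hterm r hr]
  have hE : (eval x (derivative p))^2
      - eval x p * eval x (derivative (derivative p))
      = (p.leadingCoeff)^2 * ∑ r ∈ S, (g r)^2 :=
    Complex.ofReal_injective hkey
  rw [hE]
  have hlc0 : p.leadingCoeff ≠ 0 := Polynomial.leadingCoeff_ne_zero.mpr hp0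
  have hSne : S.Nonempty := Finset.card_pos.mp (by omega)
  have hpos : 0 < ∑ r ∈ S, (g r)^2 := by
    refine Finset.sum_pos' (fun r _ => sq_nonneg _) ?_
    by_cases hx : ∃ z ∈ S, z.re = x
    · obtain ⟨z, hzS, hzx⟩ := hx
      refine ⟨z, hzS, ?_⟩
      have : g z ≠ 0 := by
        rw [hg]
        refine Finset.prod_ne_zero_iff.mpr fun t ht => ?_
        have htne : t ≠ z := Finset.ne_of_mem_erase ht
        have h1 : t.im = 0 := hSim t (Finset.mem_of_mem_erase ht)
        have h2 : z.im = 0 := hSim z hzS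
        intro h
        apply htne
        apply Complex.ext
        · have hx : x = t.re := sub_eq_zero.mp h
          linarith
        · rw [h1, h2]
      positivity
    · push_neg at hx
      obtain ⟨z, hzS⟩ := hSne
      refine ⟨z, hzS, ?_⟩
      have : g z ≠ 0 := by
        rw [hg]
        refine Finset.prod_ne_zero_iff.mpr fun t ht => ?_
        have := hx t (Finset.mem_of_mem_erase ht)
        intro h
        exact this (by linarith [sub_eq_zero.mp h])
      positivity
  positivity
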